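/- Let H be a Hopf algebra over a field k with antipode S, C a right H-module coalgebra, M a relative [C,H]-Hopf module, and φ : C → H a right H-module coalgebra map (where H acts on itself by multiplication). Define E_C : C → C by E_C(c) = c₁·Sφ(c₂) and E_M : M → M by E_M(m) = m₍₀₎·Sφ(m₍₁₎). Then (M, E_C, E_M) is a Rota-Baxter paired right C-comodule of weight -1, i.e. (E_M⊗E_C)∘ρ = (id⊗E_C)∘ρ∘E_M + (E_M⊗id)∘ρ∘E_M - ρ∘E_M. -/

import Mathlib

open TensorProduct Coalgebra

namespace RBAux

section Conv

variable {k A L : Type*} [CommSemiring k]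
  [AddCommMonoid L] [Module k L] [Coalgebra k L]
  [AddCommMonoid A] [Module k A]
  (μ : A →ₗ[k] A →ₗ[k] A) (e : A)

/-- Convolution product of linear maps from a coalgebra into a "multiplication data". -/
noncomputable def conv (f g : L →ₗ[k] A) : L →ₗ[k] A :=
  TensorProduct.lift μ ∘ₗ TensorProduct.map f g ∘ₗ Coalgebra.comul

lemma conv_repr {ι : Type*} (f g : L →ₗ[k] A) {a : L} (r : Coalgebra.Repr k a ι) :
    conv μ f g a = ∑ i ∈ r.index, μ (f (r.left i)) (g (r.right i)) := by
  simp only [conv, LinearMap.comp_apply, ← r.eq, map_sum, TensorProduct.map_tmul,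
    TensorProduct.lift.tmul]

lemma repr_counit_right {ι : Type*} {a : L} (r : Coalgebra.Repr k a ι) :
    ∑ i ∈ r.index, Coalgebra.counit (R := k) (r.right i) • r.left i = a := by
  have h := congrArg (TensorProduct.rid k L).toLinearMap (Coalgebra.sum_tmul_counit_eq r)
  simp only [map_sum, LinearEquiv.coe_coe, TensorProduct.rid_tmul] at h
  simpa using h

lemma repr_counit_left {ι : Type*} {a : L} (r : Coalgebra.Repr k a ι) :
    ∑ i ∈ r.index, Coalgebra.counit (R := k) (r.left i) • r.right i = a := by
  have h := congrArg (TensorProduct.lid k L).toLinearMap (Coalgebra.sum_counit_tmul_eq r)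
  simp only [map_sum, LinearEquiv.coe_coe, TensorProduct.lid_tmul] at h
  simpa using h

lemma conv_assoc (hμ : ∀ x y z : A, μ (μ x y) z = μ x (μ y z)) (f g h : L →ₗ[k] A) :
    conv μ (conv μ f g) h = conv μ f (conv μ g h) := by
  ext a
  have r : Coalgebra.Repr k a (L × L) := Coalgebra.Repr.arbitrary k a
  have r₁ : ∀ i, Coalgebra.Repr k (r.left i) (L × L) := fun i => Coalgebra.Repr.arbitrary k _
  have r₂ : ∀ i, Coalgebra.Repr k (r.right i) (L × L) := fun i => Coalgebra.Repr.arbitrary k _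
  have key := Coalgebra.sum_map_tmul_tmul_eq f g h a (repr := r) (a₁ := r₁) (a₂ := r₂)
  have key2 := congrArg (TensorProduct.lift μ ∘ₗ LinearMap.lTensor A (TensorProduct.lift μ)) key
  simp only [map_sum, LinearMap.comp_apply, LinearMap.lTensor_tmul,
    TensorProduct.lift.tmul] at key2
  rw [conv_repr μ _ _ r, conv_repr μ _ _ r]
  have hl : ∀ i ∈ r.index, μ (conv μ f g (r.left i)) (h (r.right i)) =
      ∑ j ∈ (r₁ i).index, μ (f ((r₁ i).left j)) (μ (g ((r₁ i).right j)) (h (r.right i))) := by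
    intro i _
    rw [conv_repr μ f g (r₁ i)]
    simp only [map_sum, LinearMap.sum_apply, ← hμ]
  have hr : ∀ i ∈ r.index, μ (f (r.left i)) (conv μ g h (r.right i)) =
      ∑ j ∈ (r₂ i).index, μ (f (r.left i)) (μ (g ((r₂ i).left j)) (h ((r₂ i).right j))) := by
    intro i _
    rw [conv_repr μ g h (r₂ i)]
    simp only [map_sum]
  rw [Finset.sum_congr rfl hl, Finset.sum_congr rfl hr]
  exact key2.symm

lemma conv_unit_right (he : ∀ x : A, μ x e = x) (f : L →ₗ[k] A) :
    conv μ f ((Coalgebra.counit : L →ₗ[k] k).smulRight e) = f := by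
  ext a
  have r : Coalgebra.Repr k a (L × L) := Coalgebra.Repr.arbitrary k a
  rw [conv_repr μ _ _ r]
  simp only [LinearMap.smulRight_apply, map_smul, he]
  simp_rw [← map_smul, ← map_sum]
  rw [repr_counit_right r]

lemma conv_unit_left (he : ∀ x : A, μ e x = x) (f : L →ₗ[k] A) :
    conv μ ((Coalgebra.counit : L →ₗ[k] k).smulRight e) f = f := by
  ext a
  have r : Coalgebra.Repr k a (L × L) := Coalgebra.Repr.arbitrary k a
  rw [conv_repr μ _ _ r]
  simp only [LinearMap.smulRight_apply, map_smul, LinearMap.smul_apply, he]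
  simp_rw [← map_smul, ← map_sum]
  rw [repr_counit_left r]

lemma conv_inv_unique (hμ : ∀ x y z : A, μ (μ x y) z = μ x (μ y z))
    (her : ∀ x : A, μ x e = x) (hel : ∀ x : A, μ e x = x)
    {f g h : L →ₗ[k] A}
    (h1 : conv μ f g = (Coalgebra.counit : L →ₗ[k] k).smulRight e)
    (h2 : conv μ h f = (Coalgebra.counit : L →ₗ[k] k).smulRight e) : g = h := by
  calc g = conv μ ((Coalgebra.counit : L →ₗ[k] k).smulRight e) g :=
        (conv_unit_left μ e hel g).symm
    _ = conv μ (conv μ h f) g := by rw [h2]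
    _ = conv μ h (conv μ f g) := conv_assoc μ hμ h f g
    _ = conv μ h ((Coalgebra.counit : L →ₗ[k] k).smulRight e) := by rw [h1]
    _ = h := conv_unit_right μ e her h

lemma conv_add_left (f f' g : L →ₗ[k] A) :
    conv μ (f + f') g = conv μ f g + conv μ f' g := by
  unfold conv; rw [TensorProduct.map_add_left, LinearMap.add_comp, LinearMap.comp_add]
lemma conv_add_right (f g g' : L →ₗ[k] A) :
    conv μ f (g + g') = conv μ f g + conv μ f g' := by
  unfold conv; rw [TensorProduct.map_add_right, LinearMap.add_comp, LinearMap.comp_add]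
lemma conv_smul_left (c : k) (f g : L →ₗ[k] A) :
    conv μ (c • f) g = c • conv μ f g := by
  unfold conv; rw [TensorProduct.map_smul_left, LinearMap.smul_comp, LinearMap.comp_smul]
lemma conv_smul_right (c : k) (f g : L →ₗ[k] A) :
    conv μ f (c • g) = c • conv μ f g := by
  unfold conv; rw [TensorProduct.map_smul_right, LinearMap.smul_comp, LinearMap.comp_smul]
end Conv

section Hopf
variable {k H : Type*} [CommRing k] [Ring H] [HopfAlgebra k H]

local notation "S" => (HopfAlgebra.antipode k : H →ₗ[k] H)

lemma counit_antipode (a : H) :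
    Coalgebra.counit (R := k) (S a) = Coalgebra.counit (R := k) a := by
  have r : Coalgebra.Repr k a (H × H) := Coalgebra.Repr.arbitrary k a
  have h1 := congrArg (Coalgebra.counit (R := k)) (HopfAlgebra.sum_antipode_mul_eq_smul r)
  simp only [map_sum, map_smul, Bialgebra.counit_mul, Bialgebra.counit_one, smul_eq_mul,
    mul_one] at h1
  calc Coalgebra.counit (R := k) (S a)
      = Coalgebra.counit (R := k) (S (∑ i ∈ r.index,
          Coalgebra.counit (R := k) (r.right i) • r.left i)) := by rw [repr_counit_right r]
    _ = ∑ i ∈ r.index, Coalgebra.counit (R := k) (S (r.left i)) *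
          Coalgebra.counit (R := k) (r.right i) := by
        rw [map_sum, map_sum]
        exact Finset.sum_congr rfl fun i _ => by
          simp [map_smul, smul_eq_mul, mul_comm]
    _ = Coalgebra.counit (R := k) a := h1


noncomputable def convMul : (H →ₗ[k] H) →ₗ[k] (H →ₗ[k] H) →ₗ[k] (H →ₗ[k] H) :=
  LinearMap.mk₂ k (conv (LinearMap.mul k H))
    (conv_add_left _) (conv_smul_left _) (conv_add_right _) (conv_smul_right _)

lemma convMul_apply (f g : H →ₗ[k] H) : convMul f g = conv (LinearMap.mul k H) f g := rfl

/-- A `Coalgebra.Repr` for a product. -/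
noncomputable def Repr.mul {ι κ : Type*} {a b : H} (ra : Coalgebra.Repr k a ι)
    (rb : Coalgebra.Repr k b κ) : Coalgebra.Repr k (a * b) (ι × κ) where
  index := ra.index ×ˢ rb.index
  left := fun p => ra.left p.1 * rb.left p.2
  right := fun p => ra.right p.1 * rb.right p.2
  eq := by
    rw [Finset.sum_product]
    simp_rw [← Algebra.TensorProduct.tmul_mul_tmul, ← Finset.sum_mul_sum]
    rw [ra.eq, rb.eq]
    exact (Bialgebra.comul_mul a b).symm

lemma antipode_mul (a b : H) : S (a * b) = S b * S a := by
  set Fm := LinearMap.mul k H with hFm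
  set G : H →ₗ[k] H →ₗ[k] H := LinearMap.llcomp k H H H S ∘ₗ Fm with hG
  set N : H →ₗ[k] H →ₗ[k] H :=
    (LinearMap.lcomp k H S) ∘ₗ ((LinearMap.mul k H).flip ∘ₗ S) with hN
  have hGab : ∀ x y : H, G x y = S (x * y) := fun x y => rfl
  have hNab : ∀ x y : H, N x y = S y * S x := fun x y => rfl
  set uH : H →ₗ[k] H := (Coalgebra.counit : H →ₗ[k] k).smulRight 1 with huH
  have hassoc : ∀ f g h : H →ₗ[k] H, convMul (convMul f g) h = convMul f (convMul g h) := by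
    intro f g h
    simp only [convMul_apply]
    exact conv_assoc _ (fun x y z => mul_assoc x y z) f g h
  have her : ∀ f : H →ₗ[k] H, convMul f uH = f := fun f =>
    conv_unit_right (LinearMap.mul k H) 1 (fun x => mul_one x) f
  have hel : ∀ f : H →ₗ[k] H, convMul uH f = f := fun f =>
    conv_unit_left (LinearMap.mul k H) 1 (fun x => one_mul x) f
  have claim1 : conv convMul Fm G = (Coalgebra.counit : H →ₗ[k] k).smulRight uH := by
    apply LinearMap.ext; intro x
    apply LinearMap.ext; intro y
    have rx : Coalgebra.Repr k x (H × H) := Coalgebra.Repr.arbitrary k x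
    have ry : Coalgebra.Repr k y (H × H) := Coalgebra.Repr.arbitrary k y
    rw [conv_repr _ _ _ rx]
    rw [LinearMap.sum_apply]
    have step : ∀ i ∈ rx.index, (convMul (Fm (rx.left i)) (G (rx.right i))) y =
        ∑ j ∈ ry.index, (rx.left i * ry.left j) * S (rx.right i * ry.right j) := by
      intro i _
      rw [convMul_apply, conv_repr _ _ _ ry]
      rfl
    rw [Finset.sum_congr rfl step, ← Finset.sum_product']
    have key : ∑ p ∈ rx.index ×ˢ ry.index,
        rx.left p.1 * ry.left p.2 * S (rx.right p.1 * ry.right p.2) =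
        Coalgebra.counit (R := k) (x * y) • 1 :=
      HopfAlgebra.sum_mul_antipode_eq_smul (Repr.mul rx ry)
    rw [key]
    simp only [LinearMap.smulRight_apply, LinearMap.smul_apply, huH, Bialgebra.counit_mul,
      smul_smul]
  have claim2 : conv convMul N Fm = (Coalgebra.counit : H →ₗ[k] k).smulRight uH := by
    apply LinearMap.ext; intro x
    apply LinearMap.ext; intro y
    have rx : Coalgebra.Repr k x (H × H) := Coalgebra.Repr.arbitrary k x
    have ry : Coalgebra.Repr k y (H × H) := Coalgebra.Repr.arbitrary k y
    rw [conv_repr _ _ _ rx]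
    rw [LinearMap.sum_apply]
    have step : ∀ i ∈ rx.index, (convMul (N (rx.left i)) (Fm (rx.right i))) y =
        ∑ j ∈ ry.index,
          S (ry.left j) * ((S (rx.left i) * rx.right i) * ry.right j) := by
      intro i _
      rw [convMul_apply, conv_repr _ _ _ ry]
      refine Finset.sum_congr rfl fun j _ => ?_
      show (S (ry.left j) * S (rx.left i)) * (rx.right i * ry.right j) = _
      rw [mul_assoc, mul_assoc]
    rw [Finset.sum_congr rfl step, Finset.sum_comm]
    have inner : ∀ j ∈ ry.index,
        ∑ i ∈ rx.index, S (ry.left j) * ((S (rx.left i) * rx.right i) * ry.right j) =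
        Coalgebra.counit (R := k) x • (S (ry.left j) * ry.right j) := by
      intro j _
      rw [← Finset.mul_sum, ← Finset.sum_mul, HopfAlgebra.sum_antipode_mul_eq_smul rx,
        smul_mul_assoc, one_mul, mul_smul_comm]
    rw [Finset.sum_congr rfl inner, ← Finset.smul_sum, HopfAlgebra.sum_antipode_mul_eq_smul ry,
      smul_smul]
    simp only [LinearMap.smulRight_apply, LinearMap.smul_apply, huH, smul_smul]
  have main : G = N :=
    conv_inv_unique convMul uH hassoc her hel claim1 claim2
  calc S (a * b) = G a b := (hGab a b).symm
    _ = N a b := by rw [main]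
    _ = S b * S a := hNab a b


lemma antipode_comul (a : H) :
    Coalgebra.comul (R := k) (S a) =
      TensorProduct.map S S ((TensorProduct.comm k H H) (Coalgebra.comul (R := k) a)) := by
  set μ2 := LinearMap.mul k (H ⊗[k] H) with hμ2
  set Fc : H →ₗ[k] H ⊗[k] H := Coalgebra.comul with hFc
  set G : H →ₗ[k] H ⊗[k] H := Coalgebra.comul ∘ₗ S with hG
  set N : H →ₗ[k] H ⊗[k] H :=
    TensorProduct.map S S ∘ₗ (TensorProduct.comm k H H).toLinearMap ∘ₗ Coalgebra.comul with hN
  have claim1 : conv μ2 Fc G =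
      (Coalgebra.counit : H →ₗ[k] k).smulRight (1 : H ⊗[k] H) := by
    apply LinearMap.ext; intro x
    have r : Coalgebra.Repr k x (H × H) := Coalgebra.Repr.arbitrary k x
    rw [conv_repr _ _ _ r]
    have step : ∀ i ∈ r.index, μ2 (Fc (r.left i)) (G (r.right i)) =
        Coalgebra.comul (R := k) (r.left i * S (r.right i)) := by
      intro i _
      show Coalgebra.comul (R := k) (r.left i) * Coalgebra.comul (R := k) (S (r.right i)) = _
      rw [Bialgebra.comul_mul]
    rw [Finset.sum_congr rfl step, ← map_sum, HopfAlgebra.sum_mul_antipode_eq_smul r,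
      map_smul, Bialgebra.comul_one]
    simp
  have claim2 : conv μ2 N Fc =
      (Coalgebra.counit : H →ₗ[k] k).smulRight (1 : H ⊗[k] H) := by
    apply LinearMap.ext; intro x
    have r : Coalgebra.Repr k x (H × H) := Coalgebra.Repr.arbitrary k x
    have r₁ : ∀ i, Coalgebra.Repr k (r.left i) (H × H) := fun i => Coalgebra.Repr.arbitrary k _
    have r₂ : ∀ i, Coalgebra.Repr k (r.right i) (H × H) := fun i => Coalgebra.Repr.arbitrary k _
    have a₁ : ∀ i t, Coalgebra.Repr k ((r₂ i).left t) (H × H) := fun i t => Coalgebra.Repr.arbitrary k _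
    have a₂ : ∀ i t, Coalgebra.Repr k ((r₂ i).right t) (H × H) := fun i t => Coalgebra.Repr.arbitrary k _
    rw [conv_repr _ _ _ r]
    -- Step 1: expand `N (r.left i)`
    have step1 : ∀ i ∈ r.index, μ2 (N (r.left i)) (Fc (r.right i)) =
        ∑ j ∈ (r₁ i).index,
          (S ((r₁ i).right j) ⊗ₜ[k] S ((r₁ i).left j)) * Coalgebra.comul (R := k) (r.right i) := by
      intro i _
      show (TensorProduct.map S S ((TensorProduct.comm k H H) (Coalgebra.comul (r.left i)))) *
        Coalgebra.comul (R := k) (r.right i) = _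
      rw [← (r₁ i).eq]
      rw [map_sum, map_sum, Finset.sum_mul]
      simp only [TensorProduct.comm_tmul, TensorProduct.map_tmul]
    rw [Finset.sum_congr rfl step1]
    -- Step 2: regroup using coassociativity
    set Θ : H ⊗[k] (H ⊗[k] H) →ₗ[k] H ⊗[k] H :=
      TensorProduct.lift μ2 ∘ₗ
        TensorProduct.map (TensorProduct.map S S ∘ₗ (TensorProduct.comm k H H).toLinearMap)
          (Coalgebra.comul (R := k)) ∘ₗ
        (TensorProduct.assoc k H H H).symm.toLinearMap with hΘ
    have hΘap : ∀ α β γ : H, Θ (α ⊗ₜ[k] (β ⊗ₜ[k] γ)) =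
        (S β ⊗ₜ[k] S α) * Coalgebra.comul (R := k) γ := by
      intro α β γ
      simp only [hΘ, LinearMap.comp_apply, LinearEquiv.coe_coe, TensorProduct.assoc_symm_tmul,
        TensorProduct.map_tmul, TensorProduct.comm_tmul, TensorProduct.lift.tmul]
      rfl
    have E1 := Coalgebra.sum_tmul_tmul_eq r r₁ r₂
    have E1' := congrArg Θ E1
    simp only [map_sum, hΘap] at E1'
    rw [E1']
    -- Step 3: per-i collapse
    have step3 : ∀ i ∈ r.index,
        ∑ t ∈ (r₂ i).index,
          (S ((r₂ i).left t) ⊗ₜ[k] S (r.left i)) * Coalgebra.comul (R := k) ((r₂ i).right t) =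
        (1 : H) ⊗ₜ[k] (S (r.left i) * r.right i) := by
      intro i _
      set Λ : H ⊗[k] (H ⊗[k] H) →ₗ[k] H ⊗[k] H :=
        TensorProduct.map (LinearMap.mul' k H ∘ₗ LinearMap.rTensor H S)
          (LinearMap.mulLeft k (S (r.left i))) ∘ₗ
          (TensorProduct.assoc k H H H).symm.toLinearMap with hΛ
      have hΛap : ∀ α β γ : H, Λ (α ⊗ₜ[k] (β ⊗ₜ[k] γ)) =
          (S α * β) ⊗ₜ[k] (S (r.left i) * γ) := by
        intro α β γ
        simp [hΛ, LinearMap.mul'_apply]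
      have E2 := Coalgebra.sum_tmul_tmul_eq (r₂ i) (a₁ i) (a₂ i)
      have E2' := congrArg Λ E2
      simp only [map_sum, hΛap] at E2'
      have lhs2 : ∀ t ∈ (r₂ i).index,
          ∑ j ∈ (a₁ i t).index,
            (S ((a₁ i t).left j) * (a₁ i t).right j) ⊗ₜ[k] (S (r.left i) * (r₂ i).right t) =
          Coalgebra.counit (R := k) ((r₂ i).left t) •
            ((1:H) ⊗ₜ[k] (S (r.left i) * (r₂ i).right t)) := by
        intro t _
        rw [← TensorProduct.sum_tmul, HopfAlgebra.sum_antipode_mul_eq_smul (a₁ i t),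
          TensorProduct.smul_tmul']
      rw [Finset.sum_congr rfl lhs2] at E2'
      have rhs2 : ∀ t ∈ (r₂ i).index,
          (S ((r₂ i).left t) ⊗ₜ[k] S (r.left i)) * Coalgebra.comul (R := k) ((r₂ i).right t) =
          ∑ j ∈ (a₂ i t).index,
            (S ((r₂ i).left t) * (a₂ i t).left j) ⊗ₜ[k] (S (r.left i) * (a₂ i t).right j) := by
        intro t _
        rw [← (a₂ i t).eq, Finset.mul_sum]
        simp only [Algebra.TensorProduct.tmul_mul_tmul]
      rw [Finset.sum_congr rfl rhs2, ← E2']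
      -- now collapse the counit scalar
      have : ∑ t ∈ (r₂ i).index, Coalgebra.counit (R := k) ((r₂ i).left t) •
            ((1:H) ⊗ₜ[k] (S (r.left i) * (r₂ i).right t)) =
          (1:H) ⊗ₜ[k] (S (r.left i) * (∑ t ∈ (r₂ i).index,
            Coalgebra.counit (R := k) ((r₂ i).left t) • (r₂ i).right t)) := by
        rw [Finset.mul_sum, TensorProduct.tmul_sum]
        exact Finset.sum_congr rfl fun t _ => by
          rw [mul_smul_comm, TensorProduct.tmul_smul]
      rw [this, repr_counit_left (r₂ i)]
    rw [Finset.sum_congr rfl step3, ← TensorProduct.tmul_sum,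
      HopfAlgebra.sum_antipode_mul_eq_smul r]
    simp [Algebra.TensorProduct.one_def, TensorProduct.tmul_smul]
  have main : G = N := by
    refine conv_inv_unique μ2 (1 : H ⊗[k] H) (fun x y z => mul_assoc x y z)
      (fun x => mul_one x) (fun x => one_mul x) claim1 claim2
  have := congrFun (congrArg DFunLike.coe main) a
  simpa [hG, hN] using this

end Hopf

end RBAux


open RBAux

set_option maxHeartbeats 1600000 in
theorem stmt11 {k H C M : Type*} [Field k] [Ring H] [HopfAlgebra k H]
    [AddCommGroup C] [Module k C] [Coalgebra k C]
    [AddCommGroup M] [Module k M]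
    -- `C` is a right `H`-module coalgebra, with action `μC : C ⊗ H → C`:
    (μC : C ⊗[k] H →ₗ[k] C)
    (hC1 : ∀ c : C, μC (c ⊗ₜ[k] 1) = c)
    (hCmul : ∀ (c : C) (g h : H), μC (μC (c ⊗ₜ[k] g) ⊗ₜ[k] h) = μC (c ⊗ₜ[k] (g * h)))
    -- `Δ(c·h) = c₁·h₁ ⊗ c₂·h₂`:
    (hCΔ : Coalgebra.comul ∘ₗ μC =
      TensorProduct.map μC μC ∘ₗ (TensorProduct.tensorTensorTensorComm k C C H H).toLinearMap ∘ₗ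
        TensorProduct.map Coalgebra.comul Coalgebra.comul)
    -- `ε(c·h) = ε(c)ε(h)`:
    (hCε : Coalgebra.counit ∘ₗ μC =
      (TensorProduct.lid k k).toLinearMap ∘ₗ
        TensorProduct.map Coalgebra.counit Coalgebra.counit)
    -- `M` is a right `C`-comodule:
    (ρ : M →ₗ[k] M ⊗[k] C)
    (hcoassoc : (TensorProduct.assoc k M C C).toLinearMap ∘ₗ
        TensorProduct.map ρ LinearMap.id ∘ₗ ρ =
        TensorProduct.map LinearMap.id Coalgebra.comul ∘ₗ ρ)
    (hcounit : (TensorProduct.rid k M).toLinearMap ∘ₗ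
        TensorProduct.map LinearMap.id Coalgebra.counit ∘ₗ ρ = LinearMap.id)
    -- `M` is a right `H`-module via `μM : M ⊗ H → M`:
    (μM : M ⊗[k] H →ₗ[k] M)
    (hM1 : ∀ m : M, μM (m ⊗ₜ[k] 1) = m)
    (hMmul : ∀ (m : M) (g h : H), μM (μM (m ⊗ₜ[k] g) ⊗ₜ[k] h) = μM (m ⊗ₜ[k] (g * h)))
    -- `M` is a relative `[C,H]`-Hopf module: `ρ(m·h) = m₀·h₁ ⊗ m₁·h₂`:
    (hrel : ρ ∘ₗ μM =
      TensorProduct.map μM μC ∘ₗ (TensorProduct.tensorTensorTensorComm k M C H H).toLinearMap ∘ₗ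
        TensorProduct.map ρ Coalgebra.comul)
    -- `φ : C → H` is a right `H`-module coalgebra map:
    (φ : C →ₗ[k] H)
    (hφΔ : Coalgebra.comul ∘ₗ φ = TensorProduct.map φ φ ∘ₗ Coalgebra.comul)
    (hφε : Coalgebra.counit ∘ₗ φ = (Coalgebra.counit : C →ₗ[k] k))
    (hφH : ∀ (c : C) (h : H), φ (μC (c ⊗ₜ[k] h)) = φ c * h)
    -- `E_C(c) = c₁ · Sφ(c₂)` and `E_M(m) = m₀ · Sφ(m₁)`:
    (E_C : C →ₗ[k] C)
    (hEC : E_C = μC ∘ₗ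
      TensorProduct.map LinearMap.id ((HopfAlgebra.antipode k : H →ₗ[k] H) ∘ₗ φ) ∘ₗ
        Coalgebra.comul)
    (E_M : M →ₗ[k] M)
    (hEM : E_M = μM ∘ₗ
      TensorProduct.map LinearMap.id ((HopfAlgebra.antipode k : H →ₗ[k] H) ∘ₗ φ) ∘ₗ ρ) :
    -- `(M, E_C, E_M)` is a Rota-Baxter paired right `C`-comodule of weight `-1`:
    TensorProduct.map E_M E_C ∘ₗ ρ =
      TensorProduct.map E_M LinearMap.id ∘ₗ ρ ∘ₗ E_M +
        TensorProduct.map LinearMap.id E_C ∘ₗ ρ ∘ₗ E_M + (-1 : k) • (ρ ∘ₗ E_M) := by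
  classical
  set Sφ : C →ₗ[k] H := (HopfAlgebra.antipode k : H →ₗ[k] H) ∘ₗ φ with hSφdef
  -- choose expansions of ρ
  have hρ : ∀ x : M, ∃ s : Finset (M × C), ρ x = ∑ p ∈ s, p.1 ⊗ₜ[k] p.2 := fun x =>
    TensorProduct.exists_finset (ρ x)
  choose F1 hF1 using hρ
  have rc : ∀ c : C, Coalgebra.Repr k c (C × C) := fun c => Coalgebra.Repr.arbitrary k c
  have rh : ∀ h : H, Coalgebra.Repr k h (H × H) := fun h => Coalgebra.Repr.arbitrary k h
  -- pointwise formulas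
  have hEMap : ∀ x : M, E_M x = ∑ q ∈ F1 x, μM (q.1 ⊗ₜ[k] Sφ q.2) := by
    intro x
    rw [hEM]
    simp only [LinearMap.comp_apply]
    rw [hF1 x, map_sum, map_sum]
    simp only [TensorProduct.map_tmul, LinearMap.id_coe, id_eq, hSφdef]
  have hECap : ∀ c : C, E_C c =
      ∑ j ∈ (rc c).index, μC ((rc c).left j ⊗ₜ[k] Sφ ((rc c).right j)) := by
    intro c
    rw [hEC]
    simp only [LinearMap.comp_apply]
    rw [← (rc c).eq, map_sum, map_sum]
    simp only [TensorProduct.map_tmul, LinearMap.id_coe, id_eq, hSφdef]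
  -- pointwise form of the Hopf-module compatibility, for an arbitrary Repr of h
  have hrel' : ∀ (x : M) (h : H),
      ρ (μM (x ⊗ₜ[k] h)) = ∑ q ∈ F1 x, ∑ j ∈ (rh h).index,
        μM (q.1 ⊗ₜ[k] (rh h).left j) ⊗ₜ[k] μC (q.2 ⊗ₜ[k] (rh h).right j) := by
    intro x h
    have h0 := LinearMap.congr_fun hrel (x ⊗ₜ[k] h)
    simp only [LinearMap.comp_apply, TensorProduct.map_tmul] at h0
    rw [h0, hF1 x, ← (rh h).eq]
    rw [TensorProduct.sum_tmul]
    simp_rw [TensorProduct.tmul_sum]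
    simp only [map_sum, LinearEquiv.coe_coe, TensorProduct.tensorTensorTensorComm_tmul,
      TensorProduct.map_tmul]
  -- pointwise form of the module-coalgebra compatibility
  have hCΔ' : ∀ (c : C) (h : H),
      Coalgebra.comul (R := k) (μC (c ⊗ₜ[k] h)) = ∑ j ∈ (rc c).index, ∑ l ∈ (rh h).index,
        μC ((rc c).left j ⊗ₜ[k] (rh h).left l) ⊗ₜ[k] μC ((rc c).right j ⊗ₜ[k] (rh h).right l) := by
    intro c h
    have h0 := LinearMap.congr_fun hCΔ (c ⊗ₜ[k] h)
    simp only [LinearMap.comp_apply, TensorProduct.map_tmul] at h0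
    rw [h0, ← (rc c).eq, ← (rh h).eq]
    rw [TensorProduct.sum_tmul]
    simp_rw [TensorProduct.tmul_sum]
    simp only [map_sum, LinearEquiv.coe_coe, TensorProduct.tensorTensorTensorComm_tmul,
      TensorProduct.map_tmul]
  -- E_M is "ε-linear" over the H-action
  have L1 : ∀ (x : M) (h : H),
      E_M (μM (x ⊗ₜ[k] h)) = Coalgebra.counit (R := k) h • E_M x := by
    intro x h
    conv_lhs => rw [hEM]
    simp only [LinearMap.comp_apply]
    rw [hrel' x h, map_sum, map_sum]
    simp_rw [map_sum]
    simp only [TensorProduct.map_tmul, LinearMap.id_coe, id_eq, LinearMap.comp_apply]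
    have term : ∀ q ∈ F1 x, ∀ j ∈ (rh h).index,
        μM (μM (q.1 ⊗ₜ[k] (rh h).left j) ⊗ₜ[k] Sφ (μC (q.2 ⊗ₜ[k] (rh h).right j))) =
        μM (q.1 ⊗ₜ[k] (((rh h).left j * (HopfAlgebra.antipode k : H →ₗ[k] H) ((rh h).right j)) * Sφ q.2)) := by
      intro q _ j _
      rw [hSφdef]
      simp only [LinearMap.comp_apply]
      rw [hφH, RBAux.antipode_mul, hMmul, ← mul_assoc]
    rw [Finset.sum_congr rfl fun q hq => Finset.sum_congr rfl (term q hq)]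
    have inner : ∀ q ∈ F1 x,
        ∑ j ∈ (rh h).index,
          μM (q.1 ⊗ₜ[k] (((rh h).left j * (HopfAlgebra.antipode k : H →ₗ[k] H) ((rh h).right j)) * Sφ q.2)) =
        Coalgebra.counit (R := k) h • μM (q.1 ⊗ₜ[k] Sφ q.2) := by
      intro q _
      rw [← map_sum, ← TensorProduct.tmul_sum, ← Finset.sum_mul,
        HopfAlgebra.sum_mul_antipode_eq_smul (rh h), smul_mul_assoc, one_mul,
        TensorProduct.tmul_smul, map_smul]
    rw [Finset.sum_congr rfl inner, ← Finset.smul_sum, hEMap x]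
  -- E_C is "ε-linear" over the H-action
  have L2 : ∀ (c : C) (h : H),
      E_C (μC (c ⊗ₜ[k] h)) = Coalgebra.counit (R := k) h • E_C c := by
    intro c h
    conv_lhs => rw [hEC]
    simp only [LinearMap.comp_apply]
    rw [hCΔ' c h, map_sum, map_sum]
    simp_rw [map_sum]
    simp only [TensorProduct.map_tmul, LinearMap.id_coe, id_eq, LinearMap.comp_apply]
    have term : ∀ j ∈ (rc c).index, ∀ l ∈ (rh h).index,
        μC (μC ((rc c).left j ⊗ₜ[k] (rh h).left l) ⊗ₜ[k] Sφ (μC ((rc c).right j ⊗ₜ[k] (rh h).right l))) =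
        μC ((rc c).left j ⊗ₜ[k]
          (((rh h).left l * (HopfAlgebra.antipode k : H →ₗ[k] H) ((rh h).right l)) * Sφ ((rc c).right j))) := by
      intro j _ l _
      rw [hSφdef]
      simp only [LinearMap.comp_apply]
      rw [hφH, RBAux.antipode_mul, hCmul, ← mul_assoc]
    rw [Finset.sum_congr rfl fun j hj => Finset.sum_congr rfl (term j hj)]
    have inner : ∀ j ∈ (rc c).index,
        ∑ l ∈ (rh h).index, μC ((rc c).left j ⊗ₜ[k]
          (((rh h).left l * (HopfAlgebra.antipode k : H →ₗ[k] H) ((rh h).right l)) * Sφ ((rc c).right j))) =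
        Coalgebra.counit (R := k) h • μC ((rc c).left j ⊗ₜ[k] Sφ ((rc c).right j)) := by
      intro j _
      rw [← map_sum, ← TensorProduct.tmul_sum, ← Finset.sum_mul,
        HopfAlgebra.sum_mul_antipode_eq_smul (rh h), smul_mul_assoc, one_mul,
        TensorProduct.tmul_smul, map_smul]
    rw [Finset.sum_congr rfl inner, ← Finset.smul_sum, hECap c]
  -- counit of Sφ
  have hεSφ : ∀ c : C, Coalgebra.counit (R := k) (Sφ c) = Coalgebra.counit (R := k) c := by
    intro c
    rw [hSφdef]
    simp only [LinearMap.comp_apply]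
    rw [RBAux.counit_antipode (φ c)]
    have := LinearMap.congr_fun hφε c
    simpa using this
  -- comultiplication of Sφ
  have hΔSφ : ∀ c : C, Coalgebra.comul (R := k) (Sφ c) =
      ∑ j ∈ (rc c).index, Sφ ((rc c).right j) ⊗ₜ[k] Sφ ((rc c).left j) := by
    intro c
    rw [hSφdef]
    simp only [LinearMap.comp_apply]
    rw [RBAux.antipode_comul (φ c)]
    have h1 : Coalgebra.comul (R := k) (φ c) =
        ∑ j ∈ (rc c).index, φ ((rc c).left j) ⊗ₜ[k] φ ((rc c).right j) := by
      have h2 := LinearMap.congr_fun hφΔ c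
      simp only [LinearMap.comp_apply] at h2
      rw [h2, ← (rc c).eq, map_sum]
      simp only [TensorProduct.map_tmul]
    rw [h1, map_sum, map_sum]
    simp only [TensorProduct.comm_tmul, TensorProduct.map_tmul]
  -- relative Hopf module compatibility specialised at Sφ c
  have hrelS : ∀ (x : M) (c : C),
      ρ (μM (x ⊗ₜ[k] Sφ c)) = ∑ q ∈ F1 x, ∑ j ∈ (rc c).index,
        μM (q.1 ⊗ₜ[k] Sφ ((rc c).right j)) ⊗ₜ[k] μC (q.2 ⊗ₜ[k] Sφ ((rc c).left j)) := by
    intro x c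
    have h0 := LinearMap.congr_fun hrel (x ⊗ₜ[k] Sφ c)
    simp only [LinearMap.comp_apply, TensorProduct.map_tmul] at h0
    rw [h0, hF1 x, hΔSφ c]
    rw [TensorProduct.sum_tmul]
    simp_rw [TensorProduct.tmul_sum]
    simp only [map_sum, LinearEquiv.coe_coe, TensorProduct.tensorTensorTensorComm_tmul,
      TensorProduct.map_tmul]
  -- the master formula for ρ (E_M m)
  have HX : ∀ x : M, ρ (E_M x) =
      ∑ p ∈ F1 x, ∑ q ∈ F1 p.1, ∑ j ∈ (rc p.2).index,
        μM (q.1 ⊗ₜ[k] Sφ ((rc p.2).right j)) ⊗ₜ[k] μC (q.2 ⊗ₜ[k] Sφ ((rc p.2).left j)) := by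
    intro x
    rw [hEMap x, map_sum]
    exact Finset.sum_congr rfl fun p _ => hrelS p.1 p.2
  -- pointwise comodule coassociativity
  have hco : ∀ x : M,
      ∑ p ∈ F1 x, ∑ q ∈ F1 p.1, q.1 ⊗ₜ[k] (q.2 ⊗ₜ[k] p.2) =
      ∑ p ∈ F1 x, ∑ j ∈ (rc p.2).index,
        p.1 ⊗ₜ[k] ((rc p.2).left j ⊗ₜ[k] (rc p.2).right j) := by
    intro x
    have h0 := LinearMap.congr_fun hcoassoc x
    simp only [LinearMap.comp_apply, LinearEquiv.coe_coe] at h0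
    calc ∑ p ∈ F1 x, ∑ q ∈ F1 p.1, q.1 ⊗ₜ[k] (q.2 ⊗ₜ[k] p.2)
        = (TensorProduct.assoc k M C C) ((TensorProduct.map ρ LinearMap.id) (ρ x)) := by
          rw [hF1 x, map_sum, map_sum]
          refine Finset.sum_congr rfl fun p _ => ?_
          rw [TensorProduct.map_tmul, LinearMap.id_coe, id_eq, hF1 p.1,
            TensorProduct.sum_tmul, map_sum]
          simp only [TensorProduct.assoc_tmul]
      _ = (TensorProduct.map LinearMap.id Coalgebra.comul) (ρ x) := h0
      _ = _ := by
          rw [hF1 x, map_sum]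
          refine Finset.sum_congr rfl fun p _ => ?_
          rw [TensorProduct.map_tmul, LinearMap.id_coe, id_eq, ← (rc p.2).eq,
            TensorProduct.tmul_sum]
  -- (E_M ⊗ id) ∘ ρ ∘ E_M = (E_M ⊗ E_C) ∘ ρ
  have HA : ∀ x : M,
      TensorProduct.map E_M LinearMap.id (ρ (E_M x)) = TensorProduct.map E_M E_C (ρ x) := by
    intro x
    rw [HX x]
    simp only [map_sum, TensorProduct.map_tmul, LinearMap.id_coe, id_eq]
    have t1 : ∀ p ∈ F1 x, ∀ q ∈ F1 p.1,
        ∑ j ∈ (rc p.2).index,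
          E_M (μM (q.1 ⊗ₜ[k] Sφ ((rc p.2).right j))) ⊗ₜ[k] μC (q.2 ⊗ₜ[k] Sφ ((rc p.2).left j)) =
        E_M q.1 ⊗ₜ[k] μC (q.2 ⊗ₜ[k] Sφ p.2) := by
      intro p _ q _
      have t2 : ∀ j ∈ (rc p.2).index,
          E_M (μM (q.1 ⊗ₜ[k] Sφ ((rc p.2).right j))) ⊗ₜ[k] μC (q.2 ⊗ₜ[k] Sφ ((rc p.2).left j)) =
          Coalgebra.counit (R := k) ((rc p.2).right j) •
            (E_M q.1 ⊗ₜ[k] μC (q.2 ⊗ₜ[k] Sφ ((rc p.2).left j))) := by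
        intro j _
        rw [L1, hεSφ, TensorProduct.smul_tmul']
      rw [Finset.sum_congr rfl t2]
      conv_rhs => rw [← repr_counit_right (rc p.2)]
      rw [map_sum, TensorProduct.tmul_sum, map_sum, TensorProduct.tmul_sum]
      refine Finset.sum_congr rfl fun j _ => ?_
      rw [map_smul, TensorProduct.tmul_smul, map_smul, TensorProduct.tmul_smul,
        TensorProduct.smul_tmul']
    rw [Finset.sum_congr rfl fun p hp => Finset.sum_congr rfl (t1 p hp)]
    have key := congrArg (TensorProduct.map E_M (μC ∘ₗ LinearMap.lTensor C Sφ)) (hco x)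
    simp only [map_sum, TensorProduct.map_tmul, LinearMap.comp_apply,
      LinearMap.lTensor_tmul] at key
    rw [key, hF1 x, map_sum]
    refine Finset.sum_congr rfl fun p _ => ?_
    rw [TensorProduct.map_tmul, hECap p.2, TensorProduct.tmul_sum]
  -- the four-fold regrouping identity
  have hco2 : ∀ x : M,
      ∑ p ∈ F1 x, ∑ q ∈ F1 p.1, ∑ t ∈ (rc q.2).index,
        q.1 ⊗ₜ[k] ((rc q.2).left t ⊗ₜ[k] ((rc q.2).right t ⊗ₜ[k] p.2)) =
      ∑ p ∈ F1 x, ∑ q ∈ F1 p.1, ∑ j ∈ (rc p.2).index,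
        q.1 ⊗ₜ[k] (q.2 ⊗ₜ[k] ((rc p.2).left j ⊗ₜ[k] (rc p.2).right j)) := by
    intro x
    set Pi1 : M ⊗[k] (C ⊗[k] C) →ₗ[k] M ⊗[k] (C ⊗[k] (C ⊗[k] C)) :=
      LinearMap.lTensor M ((TensorProduct.assoc k C C C).toLinearMap ∘ₗ
        LinearMap.rTensor C (Coalgebra.comul (R := k))) with hPi1
    set Pi2 : M ⊗[k] (C ⊗[k] C) →ₗ[k] M ⊗[k] (C ⊗[k] (C ⊗[k] C)) :=
      LinearMap.lTensor M (LinearMap.lTensor C (Coalgebra.comul (R := k))) with hPi2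
    have e1 : ∀ (y : M) (c d : C), Pi1 (y ⊗ₜ[k] (c ⊗ₜ[k] d)) =
        ∑ t ∈ (rc c).index, y ⊗ₜ[k] ((rc c).left t ⊗ₜ[k] ((rc c).right t ⊗ₜ[k] d)) := by
      intro y c d
      rw [hPi1, LinearMap.lTensor_tmul]
      simp only [LinearMap.comp_apply, LinearMap.rTensor_tmul]
      rw [← (rc c).eq, TensorProduct.sum_tmul, map_sum]
      simp only [LinearEquiv.coe_coe, TensorProduct.assoc_tmul]
      rw [TensorProduct.tmul_sum]
    have e2 : ∀ (y : M) (c d : C), Pi2 (y ⊗ₜ[k] (c ⊗ₜ[k] d)) =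
        ∑ j ∈ (rc d).index, y ⊗ₜ[k] (c ⊗ₜ[k] ((rc d).left j ⊗ₜ[k] (rc d).right j)) := by
      intro y c d
      rw [hPi2, LinearMap.lTensor_tmul, LinearMap.lTensor_tmul, ← (rc d).eq,
        TensorProduct.tmul_sum, TensorProduct.tmul_sum]
    have p1 := congrArg Pi1 (hco x)
    have p2 := congrArg Pi2 (hco x)
    simp only [map_sum] at p1 p2
    rw [Finset.sum_congr rfl fun p _ => Finset.sum_congr rfl fun q _ => e1 q.1 q.2 p.2] at p1
    rw [Finset.sum_congr rfl fun p _ => Finset.sum_congr rfl fun q _ => e2 q.1 q.2 p.2] at p2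
    rw [p1, p2]
    refine Finset.sum_congr rfl fun p _ => ?_
    -- bridge: coassociativity of the comultiplication of C applied to p.2
    have c1 := Coalgebra.coassoc_apply (R := k) p.2
    have b1 : ∑ j ∈ (rc p.2).index, Pi1 (p.1 ⊗ₜ[k] ((rc p.2).left j ⊗ₜ[k] (rc p.2).right j)) =
        Pi1 (p.1 ⊗ₜ[k] Coalgebra.comul (R := k) p.2) := by
      rw [← (rc p.2).eq, TensorProduct.tmul_sum, map_sum]
    have b2 : ∑ j ∈ (rc p.2).index, Pi2 (p.1 ⊗ₜ[k] ((rc p.2).left j ⊗ₜ[k] (rc p.2).right j)) =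
        Pi2 (p.1 ⊗ₜ[k] Coalgebra.comul (R := k) p.2) := by
      rw [← (rc p.2).eq, TensorProduct.tmul_sum, map_sum]
    have b3 : Pi1 (p.1 ⊗ₜ[k] Coalgebra.comul (R := k) p.2) =
        Pi2 (p.1 ⊗ₜ[k] Coalgebra.comul (R := k) p.2) := by
      rw [hPi1, hPi2, LinearMap.lTensor_tmul, LinearMap.lTensor_tmul]
      exact congrArg (fun z => p.1 ⊗ₜ[k] z) (by simp)
    calc ∑ j ∈ (rc p.2).index, Pi1 (p.1 ⊗ₜ[k] ((rc p.2).left j ⊗ₜ[k] (rc p.2).right j))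
        = Pi1 (p.1 ⊗ₜ[k] Coalgebra.comul (R := k) p.2) := b1
      _ = Pi2 (p.1 ⊗ₜ[k] Coalgebra.comul (R := k) p.2) := b3
      _ = ∑ j ∈ (rc p.2).index, Pi2 (p.1 ⊗ₜ[k] ((rc p.2).left j ⊗ₜ[k] (rc p.2).right j)) := b2.symm
  -- (id ⊗ E_C) ∘ ρ ∘ E_M = ρ ∘ E_M
  have HB : ∀ x : M,
      TensorProduct.map LinearMap.id E_C (ρ (E_M x)) = ρ (E_M x) := by
    intro x
    conv_lhs => rw [HX x]
    simp only [map_sum, TensorProduct.map_tmul, LinearMap.id_coe, id_eq]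
    have t1 : ∀ p ∈ F1 x, ∀ q ∈ F1 p.1,
        ∑ j ∈ (rc p.2).index,
          μM (q.1 ⊗ₜ[k] Sφ ((rc p.2).right j)) ⊗ₜ[k] E_C (μC (q.2 ⊗ₜ[k] Sφ ((rc p.2).left j))) =
        μM (q.1 ⊗ₜ[k] Sφ p.2) ⊗ₜ[k] E_C q.2 := by
      intro p _ q _
      have t2 : ∀ j ∈ (rc p.2).index,
          μM (q.1 ⊗ₜ[k] Sφ ((rc p.2).right j)) ⊗ₜ[k] E_C (μC (q.2 ⊗ₜ[k] Sφ ((rc p.2).left j))) =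
          Coalgebra.counit (R := k) ((rc p.2).left j) •
            (μM (q.1 ⊗ₜ[k] Sφ ((rc p.2).right j)) ⊗ₜ[k] E_C q.2) := by
        intro j _
        rw [L2, hεSφ, TensorProduct.tmul_smul]
      rw [Finset.sum_congr rfl t2]
      conv_rhs => rw [← repr_counit_left (rc p.2)]
      rw [map_sum, TensorProduct.tmul_sum, map_sum, TensorProduct.sum_tmul]
      refine Finset.sum_congr rfl fun j _ => ?_
      rw [map_smul, TensorProduct.tmul_smul, map_smul, TensorProduct.smul_tmul']
    rw [Finset.sum_congr rfl fun p hp => Finset.sum_congr rfl (t1 p hp)]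
    -- now use the regrouping identity hco2
    set Fm : M ⊗[k] (C ⊗[k] (C ⊗[k] C)) →ₗ[k] M ⊗[k] C :=
      TensorProduct.map μM μC ∘ₗ (TensorProduct.tensorTensorTensorComm k M C H H).toLinearMap ∘ₗ
        LinearMap.lTensor (M ⊗[k] C)
          ((TensorProduct.comm k H H).toLinearMap ∘ₗ TensorProduct.map Sφ Sφ) ∘ₗ
        (TensorProduct.assoc k M C (C ⊗[k] C)).symm.toLinearMap with hFm
    have hFap : ∀ (y : M) (a b d : C), Fm (y ⊗ₜ[k] (a ⊗ₜ[k] (b ⊗ₜ[k] d))) =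
        μM (y ⊗ₜ[k] Sφ d) ⊗ₜ[k] μC (a ⊗ₜ[k] Sφ b) := by
      intro y a b d
      rw [hFm]
      simp only [LinearMap.comp_apply, LinearEquiv.coe_coe, TensorProduct.assoc_symm_tmul,
        LinearMap.lTensor_tmul, TensorProduct.map_tmul, TensorProduct.comm_tmul,
        TensorProduct.tensorTensorTensorComm_tmul]
    have key := congrArg Fm (hco2 x)
    simp only [map_sum, hFap] at key
    have lhs1 : ∀ p ∈ F1 x, ∀ q ∈ F1 p.1,
        ∑ t ∈ (rc q.2).index,
          μM (q.1 ⊗ₜ[k] Sφ p.2) ⊗ₜ[k] μC ((rc q.2).left t ⊗ₜ[k] Sφ ((rc q.2).right t)) =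
        μM (q.1 ⊗ₜ[k] Sφ p.2) ⊗ₜ[k] E_C q.2 := by
      intro p _ q _
      rw [← TensorProduct.tmul_sum, ← hECap q.2]
    rw [Finset.sum_congr rfl fun p hp => Finset.sum_congr rfl (lhs1 p hp)] at key
    rw [key, ← HX x]
  -- final assembly
  apply LinearMap.ext
  intro x
  simp only [LinearMap.comp_apply, LinearMap.add_apply, LinearMap.smul_apply]
  rw [HA x, HB x, neg_one_smul]
  abel
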